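/- Suppose F ⊆ P(ω) is a dense independent family and σ is an automorphism of F (induced by a permutation of ω) that is not the identity permutation. Then there exist pairwise distinct sets C_n ∈ F (n ∈ ω) such that for all n, C_{2n} \ C_{2n+1} ⊆ supp(σ), where supp(σ) = { m : σ(m) ≠ m }. -/

import Mathlib

/-- If `F` is a dense independent family on `ω` and `σ` is a non-identity permutation of
`ω` inducing an automorphism of `F`, then there are pairwise distinct `C n ∈ F` with
`C (2n) \ C (2n+1) ⊆ supp σ` for all `n`. -/
theorem stmt_12 (F : Set (Set ℕ))
    (hdense : ∀ s t : Finset ℕ, Disjoint s t →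
      {C : Set ℕ | C ∈ F ∧ ↑s ⊆ C ∧ C ∩ ↑t = ∅}.Infinite)
    (hind : ∀ F₀ F₁ : Finset (Set ℕ), ↑F₀ ⊆ F → ↑F₁ ⊆ F → Disjoint F₀ F₁ →
      ((⋂ C ∈ F₀, C) \ ⋃ C ∈ F₁, C).Infinite)
    (σ : Equiv.Perm ℕ) (hσ : σ ≠ 1)
    (hσF : ∀ C, C ∈ F ↔ σ '' C ∈ F) :
    ∃ Cs : ℕ → Set ℕ, Function.Injective Cs ∧ (∀ n, Cs n ∈ F) ∧
      ∀ n, Cs (2 * n) \ Cs (2 * n + 1) ⊆ {m : ℕ | σ m ≠ m} := by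
  obtain ⟨a, ha⟩ : ∃ a, σ a ≠ a := by
    by_contra h
    push_neg at h
    exact hσ (Equiv.ext h)
  have hdisj : Disjoint ({a} : Finset ℕ) ({σ a} : Finset ℕ) := by
    simp [Finset.disjoint_singleton]
    exact fun h => ha h.symm
  have hS := hdense {a} {σ a} hdisj
  obtain ⟨f, finj⟩ := hS.natEmbedding
  set D : ℕ → Set ℕ := fun k => (f k : Set ℕ) with hD
  have hDmem : ∀ k, D k ∈ F ∧ a ∈ D k ∧ σ a ∉ D k := by
    intro k
    obtain ⟨h1, h2, h3⟩ := (f k).2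
    refine ⟨h1, h2 (by simp), fun hmem => ?_⟩
    have : σ a ∈ D k ∩ (↑({σ a} : Finset ℕ) : Set ℕ) := ⟨hmem, by simp⟩
    rw [h3] at this
    exact this
  have hDinj : Function.Injective D := by
    intro i j h
    have : f i = f j := Subtype.ext h
    exact finj this
  refine ⟨fun n => if Even n then D (n / 2) else σ '' D (n / 2), ?_, ?_, ?_⟩
  · intro m n h
    have key : ∀ i j : ℕ, D i ≠ σ '' D j := by
      intro i j hij
      have h1 : σ a ∈ σ '' D j := ⟨a, (hDmem j).2.1, rfl⟩
      rw [← hij] at h1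
      exact (hDmem i).2.2 h1
    rcases Nat.even_or_odd m with hm | hm <;> rcases Nat.even_or_odd n with hn | hn
    · simp only [if_pos hm, if_pos hn] at h
      obtain ⟨i, rfl⟩ := hm; obtain ⟨j, rfl⟩ := hn
      have := hDinj h
      omega
    · simp only [if_pos hm, if_neg (Nat.not_even_iff_odd.mpr hn)] at h
      exact absurd h (key _ _)
    · simp only [if_neg (Nat.not_even_iff_odd.mpr hm), if_pos hn] at h
      exact absurd h.symm (key _ _)
    · simp only [if_neg (Nat.not_even_iff_odd.mpr hm), if_neg (Nat.not_even_iff_odd.mpr hn)] at h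
      have := hDinj (Set.image_injective.mpr σ.injective h)
      obtain ⟨i, rfl⟩ := hm; obtain ⟨j, rfl⟩ := hn
      omega
  · intro n
    by_cases hn : Even n
    · simp only [if_pos hn]; exact (hDmem _).1
    · simp only [if_neg hn]; exact (hσF _).mp (hDmem _).1
  · intro n m hm
    have he : Even (2 * n) := ⟨n, by ring⟩
    have ho : ¬ Even (2 * n + 1) := by simp [Nat.even_add_one, he]
    simp only [if_pos he, if_neg ho] at hm
    have h2 : (2 * n) / 2 = n := by omega
    have h3 : (2 * n + 1) / 2 = n := by omega
    rw [h2] at hm; rw [h3] at hm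
    intro heq
    exact hm.2 ⟨m, hm.1, heq⟩
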